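/- Let (c_1,...,c_r) be natural numbers with c = max_i c_i, let Z_1,...,Z_r be independent Bernoulli(p) random variables, S_j = Σ_{i≤j} c_i Z_i, μ_j = E[S_j], and μ = μ_r. Then for all u ≥ 0, P(max_{1≤j≤r}(S_j − μ_j) ≥ u) ≤ exp(−u²/(2c(μ + u/3))). -/

import Mathlib

open MeasureTheory Finset Real
section Aux
open scoped Nat

private lemma fact_ge_aux' : ∀ n : ℕ, 2 * 3 ^ n ≤ (n + 2)! := by
  intro n
  induction n with
  | zero => simp [Nat.factorial]
  | succ k ih =>
      calc 2 * 3 ^ (k + 1) = 3 * (2 * 3 ^ k) := by ring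
        _ ≤ 3 * (k + 2)! := by omega
        _ ≤ (k + 3) * (k + 2)! := Nat.mul_le_mul_right _ (by omega)
        _ = (k + 3)! := rfl

private lemma exp_le_bernstein' {x : ℝ} (hx : 0 ≤ x) (hx3 : x < 3) :
    Real.exp x ≤ 1 + x + x ^ 2 / 2 * (1 - x / 3)⁻¹ := by
  have hsum := Real.summable_pow_div_factorial x
  have hexp : Real.exp x = ∑' n : ℕ, x ^ n / n ! := by
    rw [Real.exp_eq_exp_ℝ, NormedSpace.exp_eq_tsum_div]
  have hsplit := Summable.sum_add_tsum_nat_add (f := fun n : ℕ => x ^ n / n !) 2 hsum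
  have hrange : ∑ i ∈ Finset.range 2, x ^ i / i ! = 1 + x := by
    simp [Finset.sum_range_succ, Nat.factorial]
  have hgeo : 0 ≤ x / 3 ∧ x / 3 < 1 := ⟨by positivity, by linarith⟩
  have hterm : ∀ n : ℕ, x ^ (n + 2) / (n + 2)! ≤ x ^ 2 / 2 * (x / 3) ^ n := by
    intro n
    have h1 : (2 * 3 ^ n : ℝ) ≤ ((n + 2)! : ℝ) := by exact_mod_cast fact_ge_aux' n
    have h2 : (0:ℝ) < 2 * 3 ^ n := by positivity
    calc x ^ (n + 2) / (n + 2)! ≤ x ^ (n + 2) / (2 * 3 ^ n) :=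
          div_le_div_of_nonneg_left (pow_nonneg hx (n+2)) h2 h1
      _ = x ^ 2 / 2 * (x / 3) ^ n := by rw [div_pow]; ring
  have hsum2 : Summable (fun n : ℕ => x ^ (n + 2) / (n + 2)!) := by
    exact_mod_cast (summable_nat_add_iff 2).2 hsum
  have hsumg : Summable (fun n : ℕ => x ^ 2 / 2 * (x / 3) ^ n) :=
    (summable_geometric_of_lt_one hgeo.1 hgeo.2).mul_left _
  have htail : ∑' n : ℕ, x ^ (n + 2) / (n + 2)! ≤ x ^ 2 / 2 * (1 - x / 3)⁻¹ := by
    calc ∑' n : ℕ, x ^ (n + 2) / (n + 2)! ≤ ∑' n : ℕ, x ^ 2 / 2 * (x / 3) ^ n :=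
          Summable.tsum_le_tsum hterm hsum2 hsumg
      _ = x ^ 2 / 2 * (1 - x / 3)⁻¹ := by
          rw [tsum_mul_left, tsum_geometric_of_lt_one hgeo.1 hgeo.2]
  have hE : Real.exp x = (1 + x) + ∑' n : ℕ, x ^ (n + 2) / (n + 2)! := by
    rw [hexp, ← hsplit, hrange]
  linarith

private lemma per_i_bound' {t ci cm : ℝ} (ht : 0 ≤ t) (hci : 0 < ci) (hcic : ci ≤ cm)
    (h3 : t * cm < 3) :
    exp (t * ci) - 1 - t * ci ≤ t ^ 2 * ci * cm / (2 * (1 - t * cm / 3)) := by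
  have hx0 : 0 ≤ t * ci := mul_nonneg ht hci.le
  have hxc : t * ci ≤ t * cm := mul_le_mul_of_nonneg_left hcic ht
  have hx3 : t * ci < 3 := lt_of_le_of_lt hxc h3
  have hden : 0 < 1 - t * cm / 3 := by linarith
  have hden2 : 0 < 1 - t * ci / 3 := by linarith
  have h1 := exp_le_bernstein' hx0 hx3
  have h2 : (t * ci) ^ 2 / 2 * (1 - t * ci / 3)⁻¹ ≤ t ^ 2 * ci * cm / (2 * (1 - t * cm / 3)) := by
    rw [div_mul_eq_mul_div, ← div_eq_mul_inv, div_div]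
    apply div_le_div₀ (by nlinarith [sq_nonneg t, hci.trans_le hcic]) ?_ (by linarith) ?_
    · nlinarith
    · nlinarith
  linarith

private lemma final_algebra' {u cm μ : ℝ} (hu : 0 < u) (hcm : 0 < cm) (hμ : 0 < μ) :
    0 < u / (cm * (μ + u / 3)) ∧ u / (cm * (μ + u / 3)) * cm < 3 ∧
    -(u / (cm * (μ + u / 3)) * u) +
        (u / (cm * (μ + u / 3))) ^ 2 * cm * μ / (2 * (1 - u / (cm * (μ + u / 3)) * cm / 3))
      = -(u ^ 2) / (2 * cm * (μ + u / 3)) := by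
  have hD : 0 < μ + u / 3 := by linarith
  have ht : 0 < u / (cm * (μ + u / 3)) := div_pos hu (by positivity)
  refine ⟨ht, ?_, ?_⟩
  · rw [div_mul_eq_mul_div, mul_comm cm (μ + u/3), div_lt_iff₀ (by positivity)]
    nlinarith
  · have h1 : 1 - u / (cm * (μ + u / 3)) * cm / 3 = μ / (μ + u / 3) := by
      rw [show u / (cm * (μ + u / 3)) * cm = u / (μ + u / 3) by field_simp]
      field_simp; ring
    rw [h1]
    field_simp
    ring

private lemma bern_mgf_bounds' {a p : ℝ} (ha : 0 ≤ a) (hp0 : 0 ≤ p) (hp1 : p ≤ 1) :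
    1 ≤ p * exp (a * (1 - p)) + (1 - p) * exp (a * (0 - p)) ∧
    p * exp (a * (1 - p)) + (1 - p) * exp (a * (0 - p)) ≤ exp (p * (exp a - 1 - a)) := by
  have hkey : p * exp (a * (1 - p)) + (1 - p) * exp (a * (0 - p))
      = (1 + p * (exp a - 1)) * exp (-(a * p)) := by
    have e1 : a * (1 - p) = a + -(a * p) := by ring
    have e2 : a * (0 - p) = -(a * p) := by ring
    rw [e1, e2, Real.exp_add]
    ring
  have hconv := convexOn_exp.2 (Set.mem_univ (0:ℝ)) (Set.mem_univ a)
      (by linarith : (0:ℝ) ≤ 1 - p) hp0 (by ring)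
  constructor
  · rw [hkey]
    have h2 : exp (a * p) ≤ 1 + p * (exp a - 1) := by
      simp only [smul_eq_mul, mul_zero, zero_add, Real.exp_zero, mul_one] at hconv
      calc exp (a * p) = exp ((1 - p) * 0 + p * a) := by ring_nf
        _ ≤ (1 - p) * 1 + p * exp a := by simpa using hconv
        _ = 1 + p * (exp a - 1) := by ring
    have h4 : exp (a * p) * exp (-(a * p)) = 1 := by rw [← Real.exp_add]; simp
    nlinarith [exp_pos (a * p), exp_pos (-(a * p))]
  · rw [hkey]
    have h5 : 1 + p * (exp a - 1) ≤ exp (p * (exp a - 1)) := by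
      have := Real.add_one_le_exp (p * (exp a - 1)); linarith
    have h6 : (1:ℝ) ≤ exp a := by rw [← Real.exp_zero]; exact exp_le_exp.mpr ha
    calc (1 + p * (exp a - 1)) * exp (-(a * p))
        ≤ exp (p * (exp a - 1)) * exp (-(a * p)) :=
          mul_le_mul_of_nonneg_right h5 (exp_pos _).le
      _ = exp (p * (exp a - 1 - a)) := by rw [← Real.exp_add]; ring_nf

private lemma bernoulli_ae' {Ω : Type*} [MeasurableSpace Ω] (P : Measure Ω)
    [IsProbabilityMeasure P]
    (p : ℝ) (hp0 : 0 ≤ p) (hp1 : p ≤ 1) (W : Ω → ℝ) (hmW : Measurable W)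
    (h1 : P {ω | W ω = 1} = ENNReal.ofReal p) (h0 : P {ω | W ω = 0} = ENNReal.ofReal (1 - p)) :
    ∀ᵐ ω ∂P, W ω = 1 ∨ W ω = 0 := by
  have hA : MeasurableSet {ω | W ω = 1} := hmW (measurableSet_singleton 1)
  have hB : MeasurableSet {ω | W ω = 0} := hmW (measurableSet_singleton 0)
  have hdisj : Disjoint {ω | W ω = 1} {ω | W ω = 0} := by
    rw [Set.disjoint_left]
    intro ω hω1 hω0
    simp only [Set.mem_setOf_eq] at hω1 hω0
    rw [hω1] at hω0; norm_num at hω0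
  have hunion : P ({ω | W ω = 1} ∪ {ω | W ω = 0}) = 1 := by
    rw [measure_union hdisj hB, h1, h0, ← ENNReal.ofReal_add hp0 (by linarith)]
    norm_num
  have hcompl : P ({ω | W ω = 1} ∪ {ω | W ω = 0})ᶜ = 0 := by
    rw [measure_compl (hA.union hB) (measure_ne_top _ _), hunion, measure_univ, tsub_self]
  filter_upwards [MeasureTheory.measure_eq_zero_iff_ae_notMem.mp hcompl] with ω hω
  simpa [Set.mem_union, Set.mem_setOf_eq] using not_not.mp (by simpa using hω)

private lemma bernoulli_integral' {Ω : Type*} [MeasurableSpace Ω] (P : Measure Ω)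
    [IsProbabilityMeasure P]
    (p : ℝ) (hp0 : 0 ≤ p) (hp1 : p ≤ 1) (W : Ω → ℝ) (hmW : Measurable W)
    (h1 : P {ω | W ω = 1} = ENNReal.ofReal p) (h0 : P {ω | W ω = 0} = ENNReal.ofReal (1 - p))
    (g : ℝ → ℝ) :
    ∫ ω, g (W ω) ∂P = p * g 1 + (1 - p) * g 0 := by
  have hA : MeasurableSet {ω | W ω = 1} := hmW (measurableSet_singleton 1)
  have hB : MeasurableSet {ω | W ω = 0} := hmW (measurableSet_singleton 0)
  have hae := bernoulli_ae' P p hp0 hp1 W hmW h1 h0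
  have hcongr : (fun ω => g (W ω)) =ᵐ[P]
      (fun ω => Set.indicator {ω | W ω = 1} (fun _ => g 1) ω
        + Set.indicator {ω | W ω = 0} (fun _ => g 0) ω) := by
    filter_upwards [hae] with ω hω
    rcases hω with h | h
    · have hne : ω ∉ {ω | W ω = 0} := by simp [Set.mem_setOf_eq, h]
      rw [Set.indicator_of_mem (by exact h), Set.indicator_of_notMem hne, h, add_zero]
    · have hne : ω ∉ {ω | W ω = 1} := by simp [Set.mem_setOf_eq, h]
      rw [Set.indicator_of_notMem hne, Set.indicator_of_mem (by exact h), h, zero_add]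
  rw [integral_congr_ae hcongr, integral_add
      ((integrable_const (g 1)).indicator hA) ((integrable_const (g 0)).indicator hB),
    integral_indicator_const _ hA, integral_indicator_const _ hB, measureReal_def, measureReal_def, h1, h0,
    ENNReal.toReal_ofReal hp0, ENNReal.toReal_ofReal (by linarith)]
  simp [smul_eq_mul]

end Aux

/-- weighted Chernoff maximal upper-tail inequality: with `c₁,…,c_r` positive
integers of maximum `cmax`, `Z₁,…,Z_r` independent Bernoulli(`p`), `S_j = Σ_{i≤j} c_i Z_i`,
`μ_j = p Σ_{i≤j} c_i` and `μ = μ_r`, for all `u ≥ 0`,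
`P(max_j (S_j − μ_j) ≥ u) ≤ exp(−u²/(2 cmax (μ + u/3)))`. -/
theorem weighted_chernoff_upper {Ω : Type*} [MeasurableSpace Ω]
    (P : Measure Ω) [IsProbabilityMeasure P]
    (r : ℕ) (hr : 0 < r) (c : Fin r → ℕ) (hc : ∀ i, 0 < c i)
    (cmax : ℕ) (hcmax : cmax = Finset.univ.sup c)
    (p : ℝ) (hp0 : 0 ≤ p) (hp1 : p ≤ 1)
    (Z : Fin r → Ω → ℝ) (hmeas : ∀ i, Measurable (Z i))
    (hindep : ProbabilityTheory.iIndepFun Z P)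
    (hbern : ∀ i, P {ω | Z i ω = 1} = ENNReal.ofReal p ∧
                  P {ω | Z i ω = 0} = ENNReal.ofReal (1 - p))
    (u : ℝ) (hu : 0 ≤ u) :
    P {ω | ∃ j : Fin r,
        u ≤ (∑ i ∈ Finset.univ.filter (· ≤ j), (c i : ℝ) * Z i ω)
              - p * (∑ i ∈ Finset.univ.filter (· ≤ j), (c i : ℝ))}
      ≤ ENNReal.ofReal
          (Real.exp (-(u ^ 2) /
            (2 * cmax * (p * (∑ i : Fin r, (c i : ℝ)) + u / 3)))) := by
  -- trivial case u = 0
  rcases hu.eq_or_lt with hu0 | hu0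
  · rw [← hu0]
    norm_num
    exact prob_le_one
  -- centered summands
  set f : Fin r → Ω → ℝ := fun i ω => (c i : ℝ) * (Z i ω - p) with hfdef
  have hmf : ∀ i, Measurable (f i) := fun i => ((hmeas i).sub measurable_const).const_mul _
  have hindf : ProbabilityTheory.iIndepFun f P :=
    hindep.comp (fun i x => (c i : ℝ) * (x - p))
      (fun i => (measurable_id.sub measurable_const).const_mul _)
  set T : Fin r → Ω → ℝ := fun j ω => ∑ i ∈ Finset.univ.filter (· ≤ j), f i ω with hTdef
  have hmT : ∀ j, Measurable (T j) := fun j => Finset.measurable_sum _ fun i _ => hmf i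
  have hTexpr : ∀ j ω, T j ω
      = (∑ i ∈ Finset.univ.filter (· ≤ j), (c i : ℝ) * Z i ω)
        - p * (∑ i ∈ Finset.univ.filter (· ≤ j), (c i : ℝ)) := by
    intro j ω
    simp only [hTdef, hfdef, mul_sub, Finset.sum_sub_distrib, Finset.mul_sum]
    congr 1
    exact Finset.sum_congr rfl fun i _ => by ring
  have hEset : {ω | ∃ j : Fin r, u ≤ (∑ i ∈ Finset.univ.filter (· ≤ j), (c i : ℝ) * Z i ω)
        - p * (∑ i ∈ Finset.univ.filter (· ≤ j), (c i : ℝ))} = {ω | ∃ j, u ≤ T j ω} := by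
    ext ω
    simp only [Set.mem_setOf_eq, hTexpr]
  rw [hEset]
  -- trivial case p = 0
  rcases hp0.eq_or_lt with hp0' | hp0'
  · have hsub : {ω | ∃ j, u ≤ T j ω} ⊆ ⋃ i, {ω | Z i ω ≠ 0} := by
      intro ω hω
      by_contra hcon
      simp only [Set.mem_iUnion, Set.mem_setOf_eq, not_exists, not_not] at hcon
      obtain ⟨j, hj⟩ := hω
      rw [hTexpr] at hj
      have : (∑ i ∈ Finset.univ.filter (· ≤ j), (c i : ℝ) * Z i ω) = 0 :=
        Finset.sum_eq_zero fun i _ => by rw [hcon i, mul_zero]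
      rw [this, ← hp0'] at hj
      simp at hj
      linarith
    have hZ0 : ∀ i, P {ω | Z i ω ≠ 0} = 0 := by
      intro i
      have h0 := (hbern i).2
      rw [← hp0'] at h0
      norm_num at h0
      have hms : MeasurableSet {ω | Z i ω = 0} :=
        measurableSet_eq_fun (hmeas i) measurable_const
      have : {ω | Z i ω ≠ 0} = {ω | Z i ω = 0}ᶜ := rfl
      rw [this, measure_compl hms (measure_ne_top _ _), h0, measure_univ, tsub_self]
    have hnull : P {ω | ∃ j, u ≤ T j ω} = 0 :=
      measure_mono_null hsub (measure_iUnion_null fun i => hZ0 i)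
    rw [hnull]
    exact zero_le
  -- main case
  set Ctot : ℝ := ∑ i : Fin r, (c i : ℝ) with hCtot
  have hCpos : 0 < Ctot := Finset.sum_pos (fun i _ => by exact_mod_cast hc i) ⟨⟨0, hr⟩, mem_univ _⟩
  set μR : ℝ := p * Ctot with hμR
  have hμpos : 0 < μR := mul_pos hp0' hCpos
  have hcmpos : (0:ℝ) < (cmax:ℝ) := by
    have h : 0 < cmax := by
      rw [hcmax]
      exact lt_of_lt_of_le (hc ⟨0, hr⟩) (Finset.le_sup (mem_univ (⟨0, hr⟩ : Fin r)))
    exact_mod_cast h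
  have hcile : ∀ i, (c i : ℝ) ≤ (cmax : ℝ) := fun i => by
    exact_mod_cast hcmax ▸ Finset.le_sup (mem_univ i)
  obtain ⟨htpos, ht3, halg⟩ := final_algebra' hu0 hcmpos hμpos
  set t : ℝ := u / ((cmax:ℝ) * (μR + u / 3)) with htdef
  -- a.e. Bernoulli values
  have hae : ∀ᵐ ω ∂P, ∀ i, Z i ω = 1 ∨ Z i ω = 0 :=
    (MeasureTheory.ae_all_iff).2 fun i =>
      bernoulli_ae' P p hp0 hp1 (Z i) (hmeas i) (hbern i).1 (hbern i).2
  have hfabs : ∀ᵐ ω ∂P, ∀ s : Finset (Fin r), |∑ i ∈ s, f i ω| ≤ Ctot := by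
    filter_upwards [hae] with ω hω s
    calc |∑ i ∈ s, f i ω| ≤ ∑ i ∈ s, |f i ω| := Finset.abs_sum_le_sum_abs _ _
      _ ≤ ∑ i ∈ s, (c i : ℝ) := by
          apply Finset.sum_le_sum
          intro i _
          have habs : |Z i ω - p| ≤ 1 := by
            rcases hω i with h | h <;> rw [h, abs_le] <;> constructor <;> linarith
          calc |f i ω| = (c i : ℝ) * |Z i ω - p| := by
                rw [hfdef, abs_mul, abs_of_nonneg (by positivity : (0:ℝ) ≤ (c i : ℝ))]
            _ ≤ (c i : ℝ) * 1 := mul_le_mul_of_nonneg_left habs (by positivity)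
            _ = (c i : ℝ) := mul_one _
      _ ≤ Ctot := by
          rw [hCtot]
          exact Finset.sum_le_sum_of_subset_of_nonneg (Finset.subset_univ s)
            (fun i _ _ => by positivity)
  have h_int : ∀ s : Finset (Fin r), Integrable (fun ω => exp (t * ∑ i ∈ s, f i ω)) P := by
    intro s
    apply Integrable.mono' (integrable_const (exp (t * Ctot)))
    · exact ((Finset.measurable_sum s fun i _ => hmf i).const_mul t).exp.aestronglyMeasurable
    · filter_upwards [hfabs] with ω hω
      rw [Real.norm_eq_abs, abs_of_pos (exp_pos _)]
      exact exp_le_exp.mpr (mul_le_mul_of_nonneg_left (le_trans (le_abs_self _) (hω s)) htpos.le)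
  -- mgf facts
  have hmgf_eq : ∀ i, ProbabilityTheory.mgf (f i) P t
      = p * exp (t * (c i : ℝ) * (1 - p)) + (1 - p) * exp (t * (c i : ℝ) * (0 - p)) := by
    intro i
    have hgi := bernoulli_integral' P p hp0 hp1 (Z i) (hmeas i) (hbern i).1 (hbern i).2
      (fun x => exp (t * ((c i : ℝ) * (x - p))))
    have heq : (fun ω => exp (t * f i ω)) = fun ω => exp (t * ((c i : ℝ) * (Z i ω - p))) := rfl
    rw [ProbabilityTheory.mgf, heq, hgi, mul_assoc, mul_assoc]
  have htc : ∀ i, 0 ≤ t * (c i : ℝ) := fun i => mul_nonneg htpos.le (by positivity)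
  have hmgf_one : ∀ i, 1 ≤ ProbabilityTheory.mgf (f i) P t := fun i => by
    rw [hmgf_eq i]
    exact (bern_mgf_bounds' (htc i) hp0 hp1).1
  have hmgf_le : ∀ i, ProbabilityTheory.mgf (f i) P t
      ≤ exp (p * (exp (t * (c i : ℝ)) - 1 - t * (c i : ℝ))) := fun i => by
    rw [hmgf_eq i]
    exact (bern_mgf_bounds' (htc i) hp0 hp1).2
  -- first passage decomposition
  set A : Fin r → Set Ω := fun j => {ω | u ≤ T j ω ∧ ∀ k, k < j → T k ω < u} with hAdef
  have hmA : ∀ j, MeasurableSet (A j) := by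
    intro j
    have hAj : A j = {ω | u ≤ T j ω} ∩ ⋂ k : Fin r, {ω | k < j → T k ω < u} := by
      ext ω
      simp only [hAdef, Set.mem_setOf_eq, Set.mem_inter_iff, Set.mem_iInter]
    rw [hAj]
    refine (measurableSet_le measurable_const (hmT j)).inter (MeasurableSet.iInter fun k => ?_)
    by_cases hk : k < j
    · have : {ω | k < j → T k ω < u} = {ω | T k ω < u} := by ext ω; simp [hk]
      rw [this]
      exact measurableSet_lt (hmT k) measurable_const
    · have : {ω | k < j → T k ω < u} = Set.univ := by ext ω; simp [hk]
      rw [this]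
      exact MeasurableSet.univ
  have hdisj : Pairwise (Function.onFun Disjoint A) := by
    intro j j' hne
    rcases hne.lt_or_gt with h | h
    · rw [Function.onFun, Set.disjoint_left]
      intro ω hω hω'
      exact absurd hω.1 (not_le.mpr (hω'.2 j h))
    · rw [Function.onFun, Set.disjoint_left]
      intro ω hω hω'
      exact absurd hω'.1 (not_le.mpr (hω.2 j' h))
  have hUnion : {ω | ∃ j, u ≤ T j ω} = ⋃ j, A j := by
    classical
    ext ω
    simp only [Set.mem_setOf_eq, Set.mem_iUnion]
    constructor
    · rintro ⟨j, hj⟩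
      have hne : (Finset.univ.filter (fun j => u ≤ T j ω)).Nonempty := ⟨j, by simp [hj]⟩
      refine ⟨(Finset.univ.filter (fun j => u ≤ T j ω)).min' hne, ?_, ?_⟩
      · have hmem := Finset.min'_mem _ hne
        rw [Finset.mem_filter] at hmem
        exact hmem.2
      · intro k hk
        by_contra hk'
        push_neg at hk'
        have hle := Finset.min'_le (Finset.univ.filter (fun j => u ≤ T j ω)) k (by simp [hk'])
        exact absurd hk (not_lt.mpr hle)
    · rintro ⟨j, hj⟩
      exact ⟨j, hj.1⟩
  rw [hUnion]
  set φ : Ω → ℝ := fun ω => exp (t * ∑ i : Fin r, f i ω) with hφdef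
  have hφint : Integrable φ P := h_int Finset.univ
  have hφnn : ∀ ω, 0 ≤ φ ω := fun ω => (exp_pos _).le
  -- key per-index estimate
  have keyj : ∀ j, exp (t * u) * (P (A j)).toReal ≤ ∫ ω, Set.indicator (A j) φ ω ∂P := by
    intro j
    set S : Finset (Fin r) := Finset.univ.filter (· ≤ j) with hS
    set Tf : Finset (Fin r) := Finset.univ.filter (fun i => ¬ i ≤ j) with hTfdef
    have hd : Disjoint S Tf := Finset.disjoint_filter_filter_not Finset.univ Finset.univ _
    set σ : Fin r → (↥S → ℝ) → ℝ := fun k v =>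
      ∑ i ∈ S.attach, if (i : Fin r) ≤ k then (c (i : Fin r) : ℝ) * (v i - p) else 0 with hσ
    have hmσ : ∀ k, Measurable (σ k) := by
      intro k
      apply Finset.measurable_sum
      intro i _
      by_cases hik : (i : Fin r) ≤ k
      · simp only [hik, if_true]
        exact ((measurable_pi_apply i).sub measurable_const).const_mul _
      · simp only [hik, if_false]
        exact measurable_const
    have hσT : ∀ k, k ≤ j → ∀ ω, σ k (fun i : ↥S => Z i ω) = T k ω := by
      intro k hk ω
      simp only [hσ]
      have h1 : (∑ i ∈ S.attach,
          if (i : Fin r) ≤ k then (c (i : Fin r) : ℝ) * (Z (i : Fin r) ω - p) else 0)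
          = ∑ i ∈ S, (if i ≤ k then (c i : ℝ) * (Z i ω - p) else 0) :=
        Finset.sum_attach S (fun i => if i ≤ k then (c i : ℝ) * (Z i ω - p) else 0)
      rw [h1, ← Finset.sum_filter]
      have h2 : S.filter (· ≤ k) = Finset.univ.filter (· ≤ k) := by
        rw [hS, Finset.filter_filter]
        apply Finset.filter_congr
        intro i _
        constructor
        · exact fun h => h.2
        · exact fun h => ⟨h.trans hk, h⟩
      rw [h2]
    set B : Set (↥S → ℝ) := {v | u ≤ σ j v ∧ ∀ k, k < j → σ k v < u} with hB
    have hmB : MeasurableSet B := by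
      have hBj : B = {v | u ≤ σ j v} ∩ ⋂ k : Fin r, {v | k < j → σ k v < u} := by
        ext v
        simp only [hB, Set.mem_setOf_eq, Set.mem_inter_iff, Set.mem_iInter]
      rw [hBj]
      refine (measurableSet_le measurable_const (hmσ j)).inter
        (MeasurableSet.iInter fun k => ?_)
      by_cases hk : k < j
      · have h3 : {v | k < j → σ k v < u} = {v | σ k v < u} := by ext v; simp [hk]
        rw [h3]
        exact measurableSet_lt (hmσ k) measurable_const
      · have h3 : {v | k < j → σ k v < u} = Set.univ := by ext v; simp [hk]
        rw [h3]
        exact MeasurableSet.univ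
    set φS : (↥S → ℝ) → ℝ := fun v => Set.indicator B (fun v => exp (t * σ j v)) v with hφS
    have hmφS : Measurable φS := (measurable_exp.comp ((hmσ j).const_mul t)).indicator hmB
    set φT : (↥Tf → ℝ) → ℝ :=
      fun v => exp (t * ∑ i ∈ Tf.attach, (c (i : Fin r) : ℝ) * (v i - p)) with hφT
    have hmφT : Measurable φT :=
      measurable_exp.comp ((Finset.measurable_sum _ fun i _ =>
        ((measurable_pi_apply i).sub measurable_const).const_mul _).const_mul t)
    set X : Ω → ℝ := fun ω => Set.indicator (A j) (fun ω => exp (t * T j ω)) ω with hX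
    set Y : Ω → ℝ := fun ω => exp (t * ∑ i ∈ Tf, f i ω) with hY
    have hXeq : X = φS ∘ (fun ω (i : ↥S) => Z i ω) := by
      funext ω
      have hmem : ω ∈ A j ↔ (fun i : ↥S => Z i ω) ∈ B := by
        simp only [hAdef, hB, Set.mem_setOf_eq]
        constructor
        · rintro ⟨h1, h2⟩
          refine ⟨by rw [hσT j le_rfl ω]; exact h1, fun k hk => ?_⟩
          rw [hσT k hk.le ω]
          exact h2 k hk
        · rintro ⟨h1, h2⟩
          rw [hσT j le_rfl ω] at h1
          refine ⟨h1, fun k hk => ?_⟩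
          have h4 := h2 k hk
          rwa [hσT k hk.le ω] at h4
      simp only [hX, hφS, Function.comp_apply]
      by_cases h : ω ∈ A j
      · rw [Set.indicator_of_mem h, Set.indicator_of_mem (hmem.mp h), hσT j le_rfl ω]
      · rw [Set.indicator_of_notMem h, Set.indicator_of_notMem (fun hb => h (hmem.mpr hb))]
    have hYeq : Y = φT ∘ (fun ω (i : ↥Tf) => Z i ω) := by
      funext ω
      simp only [hY, hφT, Function.comp_apply]
      congr 1
      rw [Finset.sum_attach Tf (fun i => (c i : ℝ) * (Z i ω - p))]
    have hIndepXY : ProbabilityTheory.IndepFun X Y P := by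
      rw [hXeq, hYeq]
      exact (hindep.indepFun_finset S Tf hd hmeas).comp hmφS hmφT
    have hXnn : 0 ≤ X := fun ω => Set.indicator_nonneg (fun _ _ => (exp_pos _).le) ω
    have hYnn : 0 ≤ Y := fun ω => (exp_pos _).le
    have hmXm : Measurable X := (measurable_exp.comp ((hmT j).const_mul t)).indicator (hmA j)
    have hmYm : Measurable Y :=
      measurable_exp.comp ((Finset.measurable_sum _ fun i _ => hmf i).const_mul t)
    have hmul := hIndepXY.integral_mul_eq_mul_integral hmXm.aestronglyMeasurable hmYm.aestronglyMeasurable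
    have hXY : X * Y = Set.indicator (A j) φ := by
      funext ω
      by_cases h : ω ∈ A j
      · simp only [Pi.mul_apply, hX, hY, hφdef]
        rw [Set.indicator_of_mem h, Set.indicator_of_mem h, ← Real.exp_add, ← mul_add]
        congr 2
        have h5 : T j ω + ∑ i ∈ Tf, f i ω = ∑ i : Fin r, f i ω := by
          rw [hTdef]
          exact Finset.sum_filter_add_sum_filter_not Finset.univ (· ≤ j) (fun i => f i ω)
        exact h5
      · simp only [Pi.mul_apply, hX]
        rw [Set.indicator_of_notMem h, Set.indicator_of_notMem h, zero_mul]
    have h1 : exp (t * u) * (P (A j)).toReal ≤ ∫ ω, X ω ∂P := by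
      have hiX : ∫ ω, X ω ∂P = ∫ ω in A j, exp (t * T j ω) ∂P := integral_indicator (hmA j)
      rw [hiX]
      have hconst : ∫ _ω in A j, exp (t * u) ∂P = (P (A j)).toReal • exp (t * u) :=
        setIntegral_const _
      rw [mul_comm, ← smul_eq_mul, ← hconst]
      apply setIntegral_mono_on (integrableOn_const (measure_ne_top _ _))
        ((h_int S).integrableOn) (hmA j)
      intro ω hω
      exact exp_le_exp.mpr (mul_le_mul_of_nonneg_left hω.1 htpos.le)
    have h2 : ∫ ω, Y ω ∂P = ∏ i ∈ Tf, ProbabilityTheory.mgf (f i) P t := by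
      rw [← hindf.mgf_sum hmf Tf]
      simp only [ProbabilityTheory.mgf, Finset.sum_apply, hY]
    have h2' : (1:ℝ) ≤ ∫ ω, Y ω ∂P := by
      rw [h2]
      calc (1:ℝ) = ∏ _i ∈ Tf, (1:ℝ) := Finset.prod_const_one.symm
        _ ≤ ∏ i ∈ Tf, ProbabilityTheory.mgf (f i) P t :=
          Finset.prod_le_prod (fun i _ => zero_le_one) (fun i _ => hmgf_one i)
    have h3 : ∫ ω, X ω ∂P ≤ ∫ ω, Set.indicator (A j) φ ω ∂P := by
      have hXint : (0:ℝ) ≤ ∫ ω, X ω ∂P := integral_nonneg hXnn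
      calc ∫ ω, X ω ∂P ≤ (∫ ω, X ω ∂P) * ∫ ω, Y ω ∂P := le_mul_of_one_le_right hXint h2'
        _ = ∫ ω, (X * Y) ω ∂P := hmul.symm
        _ = ∫ ω, Set.indicator (A j) φ ω ∂P := by rw [hXY]
    exact h1.trans h3
  -- sum over j
  have hmE : MeasurableSet (⋃ j, A j) := MeasurableSet.iUnion hmA
  have hPsum : (P (⋃ j, A j)).toReal = ∑ j, (P (A j)).toReal := by
    rw [measure_iUnion hdisj hmA, tsum_fintype]
    exact ENNReal.toReal_sum fun j _ => measure_ne_top _ _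
  have hsum_ind : ∀ ω, ∑ j, Set.indicator (A j) φ ω = Set.indicator (⋃ j, A j) φ ω := by
    intro ω
    by_cases h : ω ∈ ⋃ j, A j
    · obtain ⟨j₀, hj₀⟩ := Set.mem_iUnion.mp h
      rw [Set.indicator_of_mem h, Finset.sum_eq_single j₀]
      · exact Set.indicator_of_mem hj₀ φ
      · intro j _ hjne
        exact Set.indicator_of_notMem
          (fun hj => (Set.disjoint_left.mp (hdisj hjne) hj) hj₀) φ
      · intro h'
        exact absurd (Finset.mem_univ j₀) h'
    · rw [Set.indicator_of_notMem h]
      exact Finset.sum_eq_zero fun j _ =>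
        Set.indicator_of_notMem (fun hj => h (Set.mem_iUnion.mpr ⟨j, hj⟩)) φ
  have hchain : exp (t * u) * (P (⋃ j, A j)).toReal ≤ ∏ i, ProbabilityTheory.mgf (f i) P t := by
    rw [hPsum, Finset.mul_sum]
    calc ∑ j, exp (t * u) * (P (A j)).toReal
        ≤ ∑ j, ∫ ω, Set.indicator (A j) φ ω ∂P := Finset.sum_le_sum fun j _ => keyj j
      _ = ∫ ω, ∑ j, Set.indicator (A j) φ ω ∂P :=
          (integral_finset_sum _ fun j _ => hφint.indicator (hmA j)).symm
      _ = ∫ ω, Set.indicator (⋃ j, A j) φ ω ∂P := by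
          apply integral_congr_ae
          exact Filter.Eventually.of_forall hsum_ind
      _ ≤ ∫ ω, φ ω ∂P := by
          rw [integral_indicator hmE]
          exact setIntegral_le_integral hφint (Filter.Eventually.of_forall hφnn)
      _ = ∏ i, ProbabilityTheory.mgf (f i) P t := by
          rw [← hindf.mgf_sum hmf Finset.univ]
          simp only [ProbabilityTheory.mgf, Finset.sum_apply, hφdef]
  have hprod : ∏ i, ProbabilityTheory.mgf (f i) P t
      ≤ exp (∑ i, p * (exp (t * (c i : ℝ)) - 1 - t * (c i : ℝ))) := by
    rw [Real.exp_sum]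
    exact Finset.prod_le_prod (fun i _ => ProbabilityTheory.mgf_nonneg) (fun i _ => hmgf_le i)
  have hsumbound : ∑ i, p * (exp (t * (c i : ℝ)) - 1 - t * (c i : ℝ))
      ≤ t ^ 2 * (cmax : ℝ) * μR / (2 * (1 - t * (cmax : ℝ) / 3)) := by
    have hstep : ∀ i : Fin r, p * (exp (t * (c i : ℝ)) - 1 - t * (c i : ℝ))
        ≤ (p * t ^ 2 * (cmax : ℝ) / (2 * (1 - t * (cmax : ℝ) / 3))) * (c i : ℝ) := by
      intro i
      have h6 := per_i_bound' htpos.le (show (0:ℝ) < (c i : ℝ) by exact_mod_cast hc i)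
        (hcile i) ht3
      have h7 := mul_le_mul_of_nonneg_left h6 hp0
      calc p * (exp (t * (c i : ℝ)) - 1 - t * (c i : ℝ))
          ≤ p * (t ^ 2 * (c i : ℝ) * (cmax : ℝ) / (2 * (1 - t * (cmax : ℝ) / 3))) := h7
        _ = (p * t ^ 2 * (cmax : ℝ) / (2 * (1 - t * (cmax : ℝ) / 3))) * (c i : ℝ) := by ring
    calc ∑ i, p * (exp (t * (c i : ℝ)) - 1 - t * (c i : ℝ))
        ≤ ∑ i, (p * t ^ 2 * (cmax : ℝ) / (2 * (1 - t * (cmax : ℝ) / 3))) * (c i : ℝ) :=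
          Finset.sum_le_sum fun i _ => hstep i
      _ = (p * t ^ 2 * (cmax : ℝ) / (2 * (1 - t * (cmax : ℝ) / 3))) * Ctot := by
          rw [← Finset.mul_sum, hCtot]
      _ = t ^ 2 * (cmax : ℝ) * μR / (2 * (1 - t * (cmax : ℝ) / 3)) := by
          rw [hμR]
          ring
  have hfinal : (P (⋃ j, A j)).toReal
      ≤ exp (-(u ^ 2) / (2 * (cmax : ℝ) * (μR + u / 3))) := by
    have hP := hchain.trans (hprod.trans (exp_le_exp.mpr hsumbound))
    have hrw : (P (⋃ j, A j)).toReal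
        = exp (-(t * u)) * (exp (t * u) * (P (⋃ j, A j)).toReal) := by
      rw [← mul_assoc, ← Real.exp_add]
      simp
    rw [hrw]
    calc exp (-(t * u)) * (exp (t * u) * (P (⋃ j, A j)).toReal)
        ≤ exp (-(t * u)) * exp (t ^ 2 * (cmax : ℝ) * μR / (2 * (1 - t * (cmax : ℝ) / 3))) :=
          mul_le_mul_of_nonneg_left hP (exp_pos _).le
      _ = exp (-(t * u) + t ^ 2 * (cmax : ℝ) * μR / (2 * (1 - t * (cmax : ℝ) / 3))) :=
          (Real.exp_add _ _).symm
      _ = exp (-(u ^ 2) / (2 * (cmax : ℝ) * (μR + u / 3))) := by rw [halg]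
  calc P (⋃ j, A j) = ENNReal.ofReal ((P (⋃ j, A j)).toReal) :=
        (ENNReal.ofReal_toReal (measure_ne_top _ _)).symm
    _ ≤ ENNReal.ofReal (exp (-(u ^ 2) / (2 * (cmax : ℝ) * (μR + u / 3)))) :=
        ENNReal.ofReal_le_ofReal hfinal
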